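/- For integers 1 ≤ n < m, the number of hash sequences p ∈ {1,…,m}^{{1,…,n}} for which place m is empty after all n cars have parked (i.e. the number of confined parking schemes of n cars on m places) equals (m − n) m^{n−1}. -/

import Mathlib

open MeasureTheory Filter
open scoped BigOperators

attribute [local instance] Classical.propDecidable

namespace Parking

variable {m : ℕ}

/-- Final parking spot of a car whose first try is place `s`, given the set `occ`
of currently occupied places (places are cyclic, i.e. elements of `ZMod m`). -/
noncomputable def spot (occ : Finset (ZMod m)) (s : ZMod m) : ZMod m :=
  if h : ∃ t : ℕ, s + (t : ZMod m) ∉ occ then s + ((Nat.find h : ℕ) : ZMod m) else s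

/-- Set of occupied places after the first `k` cars of the hash sequence `p` have parked. -/
noncomputable def occs (p : ℕ → ZMod m) : ℕ → Finset (ZMod m)
  | 0 => ∅
  | k + 1 => insert (spot (occs p k) (p k)) (occs p k)

/-- Number of consecutive occupied places starting at `x` (0 if `x` is empty). -/
noncomputable def runLen (occ : Finset (ZMod m)) (x : ZMod m) : ℕ :=
  if h : ∃ t : ℕ, x + (t : ZMod m) ∉ occ then Nat.find h else 0

/-- First place of the block of consecutive occupied places containing `x`. -/
noncomputable def blockStart (occ : Finset (ZMod m)) (x : ZMod m) : ZMod m :=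
  if h : ∃ t : ℕ, x - ((t : ZMod m) + 1) ∉ occ then x - ((Nat.find h : ℕ) : ZMod m) else x

/-- Starting places of the blocks of consecutive occupied places. -/
noncomputable def blockStarts (occ : Finset (ZMod m)) : Finset (ZMod m) :=
  occ.filter (fun x => x - 1 ∉ occ)

/-- The multiset of sizes of the blocks of consecutive occupied places. -/
noncomputable def blockSizes (occ : Finset (ZMod m)) : Multiset ℕ :=
  (blockStarts occ).val.map (runLen occ)

/-- `B n p k` : size of the `k`-th largest block (1-indexed, `0` if there are fewer
than `k` blocks) once the `n` first cars of the hash sequence `p` have parked. -/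
noncomputable def B (n : ℕ) (p : ℕ → ZMod m) (k : ℕ) : ℕ :=
  ((Multiset.sort (blockSizes (occs p n)) (· ≤ ·)).reverse).getD (k - 1) 0

/-- `R n p k` : size of the `k`-th block (1-indexed, `0` if there are fewer than `k`
blocks), blocks being sorted by increasing date of birth (increasing order of the first
arrival of a car of the block), once the `n` first cars of `p` have parked. -/
noncomputable def R (n : ℕ) (p : ℕ → ZMod m) (k : ℕ) : ℕ :=
  (((((List.range n).map
        (fun i => blockStart (occs p n) (spot (occs p i) (p i)))).reverse.dedup).reverse).map
      (runLen (occs p n))).getD (k - 1) 0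

/-- Number of places tried by car `i` beyond its first try. -/
noncomputable def offs (p : ℕ → ZMod m) (i : ℕ) : ℕ :=
  if h : ∃ t : ℕ, p i + (t : ZMod m) ∉ occs p i then Nat.find h else 0

/-- `H n p y` : number of cars among the `n` first cars of `p` that tried place `y`,
successfully or not. -/
noncomputable def H (n : ℕ) (p : ℕ → ZMod m) (y : ZMod m) : ℕ :=
  ((Finset.range n).filter (fun i => ∃ t : ℕ, t ≤ offs p i ∧ p i + (t : ZMod m) = y)).card

/-- `Y n p k` : number of cars whose first try is place `k` (periodic in `k`). -/
noncomputable def Y (n : ℕ) (p : ℕ → ZMod m) (k : ℤ) : ℕ :=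
  ((Finset.range n).filter (fun i => p i = (k : ZMod m))).card

/-- `A n p k = Y₁ + ⋯ + Y_k - k n / m`. -/
noncomputable def A (n : ℕ) (p : ℕ → ZMod m) (k : ℕ) : ℝ :=
  (∑ j ∈ Finset.range k, (Y n p (j + 1) : ℝ)) - (k : ℝ) * n / m

/-- `V n p` : the smallest `j ∈ {1, …, m}` at which `A` attains its minimum over `{1, …, m}`. -/
noncomputable def V (n : ℕ) (p : ℕ → ZMod m) : ℕ :=
  sInf {j | 1 ≤ j ∧ j ≤ m ∧ ∀ i, 1 ≤ i → i ≤ m → A n p j ≤ A n p i}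

/-- `C n p k = Y₁ + ⋯ + Y_k - k` for `0 ≤ k ≤ m`, extended to `ℤ` by `C (k + m) = C k - ℓ`. -/
noncomputable def C (n : ℕ) (p : ℕ → ZMod m) (k : ℤ) : ℤ :=
  ((∑ j ∈ Finset.range (k.emod m).toNat, (Y n p (j + 1) : ℤ)) - ((k.emod m).toNat : ℤ))
    - k.ediv m * ((m : ℤ) - (n : ℤ))

/-- Extension of a hash sequence `Fin n → Fin m` to a map `ℕ → ZMod m`. -/
def ext (m n : ℕ) (p : Fin n → Fin m) : ℕ → ZMod m :=
  fun i => if h : i < n then (((p ⟨i, h⟩) : ℕ) : ZMod m) else 0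

/-- Probability of an event under the uniform distribution on the `m ^ n` hash sequences. -/
noncomputable def parkProb (m n : ℕ) (ev : (ℕ → ZMod m) → Prop) : ℝ :=
  ((Finset.univ.filter (fun p : Fin n → Fin m => ev (ext m n p))).card : ℝ) / (m : ℝ) ^ n

/-- Expectation of a random variable under the uniform distribution on hash sequences. -/
noncomputable def parkExp (m n : ℕ) (X : (ℕ → ZMod m) → ℝ) : ℝ :=
  (∑ p : Fin n → Fin m, X (ext m n p)) / (m : ℝ) ^ n

/-- `φ(M,N,K) = binom(N−1,K−1) (K+1)^{K−1} M (M−K−1)^{N−K−1} (M−N−1) / M^N`. -/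
noncomputable def phi (M N K : ℕ) : ℝ :=
  (Nat.choose (N - 1) (K - 1) : ℝ) * ((K : ℝ) + 1) ^ (K - 1) * (M : ℝ)
      * ((M - K - 1 : ℕ) : ℝ) ^ (N - K - 1) * ((M - N - 1 : ℕ) : ℝ) / (M : ℝ) ^ N

/-- The density `f(λ,x) = (λ/√(2π)) x^{−1/2} (1−x)^{−3/2} exp(−λ²x/(2(1−x)))` on `(0,1)`. -/
noncomputable def fdens (l x : ℝ) : ℝ :=
  if 0 < x ∧ x < 1 then
    l / Real.sqrt (2 * Real.pi) * x ^ (-(1 : ℝ) / 2) * (1 - x) ^ (-(3 : ℝ) / 2)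
      * Real.exp (-(l ^ 2 * x) / (2 * (1 - x)))
  else 0


lemma mem_image_add (occ : Finset (ZMod m)) (c x : ZMod m) :
    x ∈ occ.image (· + c) ↔ x - c ∈ occ := by
  simp only [Finset.mem_image]
  constructor
  · rintro ⟨y, hy, rfl⟩; simpa using hy
  · intro h; exact ⟨x - c, h, by ring⟩

lemma spot_shift (occ : Finset (ZMod m)) (s c : ZMod m) :
    spot (occ.image (· + c)) (s + c) = spot occ s + c := by
  unfold spot
  have hpred : (fun t : ℕ => s + c + (t : ZMod m) ∉ occ.image (· + c))
      = (fun t : ℕ => s + (t : ZMod m) ∉ occ) := by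
    funext t
    rw [eq_iff_iff, not_iff_not, mem_image_add,
      show s + c + (t : ZMod m) - c = s + t by ring]
  simp only [hpred]
  split
  · ring
  · rfl

lemma occs_shift (p : ℕ → ZMod m) (c : ZMod m) (k : ℕ) :
    occs (fun i => p i + c) k = (occs p k).image (· + c) := by
  induction k with
  | zero => simp [occs]
  | succ k ih =>
    show insert (spot (occs (fun i => p i + c) k) (p k + c)) _ = _
    rw [ih, spot_shift, occs]
    rw [Finset.image_insert]

lemma occs_congr (p q : ℕ → ZMod m) (k : ℕ) (h : ∀ i < k, p i = q i) :
    occs p k = occs q k := by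
  induction k with
  | zero => rfl
  | succ k ih =>
    have hk := ih (fun i hi => h i (Nat.lt_succ_of_lt hi))
    show insert (spot (occs p k) (p k)) (occs p k)
        = insert (spot (occs q k) (q k)) (occs q k)
    rw [hk, h k (Nat.lt_succ_self k)]

lemma exists_not_mem [NeZero m] (occ : Finset (ZMod m)) (h : occ.card < m) (s : ZMod m) :
    ∃ t : ℕ, s + (t : ZMod m) ∉ occ := by
  have : occ ≠ Finset.univ := by
    intro he
    rw [he, Finset.card_univ, ZMod.card] at h
    omega
  obtain ⟨y, hy⟩ : ∃ y, y ∉ occ := by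
    by_contra hc
    push_neg at hc
    exact this (Finset.eq_univ_iff_forall.2 hc)
  refine ⟨(y - s).val, ?_⟩
  rwa [ZMod.natCast_val, ZMod.cast_id, add_sub_cancel]

lemma spot_not_mem [NeZero m] (occ : Finset (ZMod m)) (h : occ.card < m) (s : ZMod m) :
    spot occ s ∉ occ := by
  unfold spot
  rw [dif_pos (exists_not_mem occ h s)]
  exact Nat.find_spec (exists_not_mem occ h s)

lemma card_occs [NeZero m] (p : ℕ → ZMod m) (k : ℕ) (hk : k ≤ m) :
    (occs p k).card = k := by
  induction k with
  | zero => rfl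
  | succ k ih =>
    have hkm : k < m := by omega
    have hc : (occs p k).card = k := ih (by omega)
    show (insert (spot (occs p k) (p k)) (occs p k)).card = k + 1
    rw [Finset.card_insert_of_notMem (spot_not_mem _ (by omega) _), hc]

/-- The number of confined parking schemes of `n` cars on `m` places (hash sequences such
that place `m`, i.e. `0` in `ZMod m`, is empty at the end) is `(m − n) m^{n−1}`. -/
theorem card_confined_parking_schemes
    (m n : ℕ) (h1 : 1 ≤ n) (h2 : n < m) :
    (Finset.univ.filter
        (fun p : Fin n → Fin m => (0 : ZMod m) ∉ occs (ext m n p) n)).card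
      = (m - n) * m ^ (n - 1) := by
  haveI : NeZero m := ⟨by omega⟩
  set T : Finset (Fin n → Fin m) :=
    Finset.univ.filter (fun p : Fin n → Fin m => (0 : ZMod m) ∉ occs (ext m n p) n) with hT
  -- the shift map
  set sh : (Fin n → Fin m) → ZMod m → (Fin n → Fin m) :=
    fun p c i => ⟨((p i : ZMod m) + c).val, ZMod.val_lt _⟩ with hsh
  have hext : ∀ (p : Fin n → Fin m) (c : ZMod m) (i : ℕ) (h : i < n),
      ext m n (sh p c) i = ext m n p i + c := by
    intro p c i h
    simp only [ext, dif_pos h, hsh]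
    rw [ZMod.natCast_val, ZMod.cast_id]
  have hoccs : ∀ (p : Fin n → Fin m) (c : ZMod m),
      occs (ext m n (sh p c)) n = (occs (ext m n p) n).image (· + c) := by
    intro p c
    rw [occs_congr (ext m n (sh p c)) (fun i => ext m n p i + c) n
      (fun i hi => hext p c i hi)]
    exact occs_shift _ _ _
  have hP : ∀ (p : Fin n → Fin m) (c : ZMod m),
      ((0 : ZMod m) ∉ occs (ext m n (sh p c)) n) ↔ (-c ∉ occs (ext m n p) n) := by
    intro p c
    rw [hoccs, not_iff_not, mem_image_add]
    simp
  -- per-c count equals T.card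
  have claimA : ∀ c : ZMod m,
      (Finset.univ.filter (fun p : Fin n → Fin m => -c ∉ occs (ext m n p) n)).card
        = T.card := by
    intro c
    apply Finset.card_bij (fun p _ => sh p c)
    · intro p hp
      simp only [hT, Finset.mem_filter, Finset.mem_univ, true_and] at hp ⊢
      rw [hP]
      exact hp
    · intro p hp q hq hpq
      funext i
      have := congrFun hpq i
      simp only [hsh, Fin.mk.injEq] at this
      have h2 : ((p i : ZMod m) + c) = ((q i : ZMod m) + c) := by
        have := congrArg (Nat.cast : ℕ → ZMod m) this
        rwa [ZMod.natCast_val, ZMod.cast_id, ZMod.natCast_val, ZMod.cast_id] at this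
      have h3 : (p i : ZMod m) = (q i : ZMod m) := by
        exact add_right_cancel h2
      have h4 : ((p i : ℕ) : ZMod m) = ((q i : ℕ) : ZMod m) := h3
      rw [ZMod.natCast_eq_natCast_iff'] at h4
      simp only [Nat.mod_eq_of_lt (p i).isLt, Nat.mod_eq_of_lt (q i).isLt] at h4
      exact Fin.ext h4
    · intro q hq
      refine ⟨sh q (-c), ?_, ?_⟩
      · simp only [Finset.mem_filter, Finset.mem_univ, true_and]
        have : occs (ext m n (sh q (-c))) n = (occs (ext m n q) n).image (· + -c) :=
          hoccs q (-c)
        rw [this, mem_image_add]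
        simp only [hT, Finset.mem_filter, Finset.mem_univ, true_and] at hq
        simpa using hq
      · funext i
        apply Fin.ext
        show (((sh q (-c) i : ℕ) : ZMod m) + c).val = (q i : ℕ)
        rw [show ((sh q (-c) i : ℕ) : ZMod m) = ((q i : ℕ) : ZMod m) + -c from by
          simp [hsh, ZMod.natCast_val, ZMod.cast_id]]
        rw [show ((q i : ℕ) : ZMod m) + -c + c = ((q i : ℕ) : ZMod m) by ring]
        exact ZMod.val_cast_of_lt (q i).isLt
  -- per-p count equals m - n
  have claimB : ∀ p : Fin n → Fin m,
      (Finset.univ.filter (fun c : ZMod m => -c ∉ occs (ext m n p) n)).card = m - n := by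
    intro p
    have hcard : (occs (ext m n p) n).card = n := card_occs _ _ (le_of_lt h2)
    have heq : Finset.univ.filter (fun c : ZMod m => -c ∉ occs (ext m n p) n)
        = (occs (ext m n p) n)ᶜ.image Neg.neg := by
      ext c
      simp only [Finset.mem_filter, Finset.mem_univ, true_and, Finset.mem_image,
        Finset.mem_compl]
      constructor
      · intro h; exact ⟨-c, h, by ring⟩
      · rintro ⟨y, hy, rfl⟩; simpa using hy
    rw [heq, Finset.card_image_of_injective _ neg_injective, Finset.card_compl, hcard,
      ZMod.card]
  -- double counting
  have key : m * T.card = m ^ n * (m - n) := by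
    have h1' : ∑ c : ZMod m,
        (Finset.univ.filter (fun p : Fin n → Fin m => -c ∉ occs (ext m n p) n)).card
        = m * T.card := by
      rw [Finset.sum_congr rfl (fun c _ => claimA c)]
      simp [ZMod.card, Finset.card_univ]
    have h2' : ∑ p : Fin n → Fin m,
        (Finset.univ.filter (fun c : ZMod m => -c ∉ occs (ext m n p) n)).card
        = m ^ n * (m - n) := by
      rw [Finset.sum_congr rfl (fun p _ => claimB p)]
      simp [Finset.card_univ, Fintype.card_fun]
    rw [← h1', ← h2']
    simp only [Finset.card_filter]
    exact Finset.sum_comm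
  have hmn : m ^ n = m * m ^ (n - 1) := by
    conv_lhs => rw [show n = (n - 1) + 1 by omega]
    rw [pow_succ]
    ring
  have : m * T.card = m * ((m - n) * m ^ (n - 1)) := by
    rw [key, hmn]; ring
  exact Nat.eq_of_mul_eq_mul_left (by omega) this
end Parking
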